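/- Let R > 0 and let I = (r₁, r₂) be an interval with r₁ ≥ R and r₂ − r₁ ≤ 2R. Let ρ ∈ L^∞(I) satisfy 0 ≤ ρ ≤ 1 almost everywhere, and set ρ̄ := (∫_I ρ(r) r^{-1} dr)/(∫_I r^{-1} dr). Define β(κ) := (π²κ + √(π⁴κ² + 4(ln 3)⁴) + 2(ln 3)²)/(2π²). Then for every κ ∈ [0,1] and every u ∈ W^{1,2}(I, r dr): ∫_I ( κ|u'(r)|² + ρ(r) r^{-2} |u(r)|² ) r dr ≥ (κ ρ̄ / β(κ)) ∫_I |u(r)|² r^{-1} dr. Moreover, κ < β(κ) < κ + 1/4 for all κ ∈ [0,1]. (One-dimensional projection bound, Lemma 4.3.) -/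

import Mathlib

open MeasureTheory Real Set

noncomputable section

/-- `β(κ) = (π²κ + √(π⁴κ² + 4(ln 3)⁴) + 2(ln 3)²) / (2π²)`. -/
def betaFn (κ : ℝ) : ℝ :=
  (π ^ 2 * κ + Real.sqrt (π ^ 4 * κ ^ 2 + 4 * Real.log 3 ^ 4) + 2 * Real.log 3 ^ 2)
    / (2 * π ^ 2)

open Filter intervalIntegral
open scoped Topology

lemma log_three_lt : Real.log 3 < 1.11 := by
  rw [Real.log_lt_iff_lt_exp (by norm_num)]
  have h1 : Real.exp 1 * Real.exp 0.11 = Real.exp 1.11 := by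
    rw [← Real.exp_add]; norm_num
  have h2 : (2.7182818283 : ℝ) < Real.exp 1 := Real.exp_one_gt_d9
  have h3 : (1.11 : ℝ) ≤ Real.exp 0.11 := by
    have := Real.add_one_le_exp (0.11 : ℝ); linarith
  calc (3:ℝ) < 2.7182818283 * 1.11 := by norm_num
  _ ≤ Real.exp 1 * Real.exp 0.11 := by
      apply mul_le_mul h2.le h3 (by norm_num) (Real.exp_pos 1).le
  _ = Real.exp 1.11 := h1

lemma eight_lsq_lt : 8 * Real.log 3 ^ 2 < π ^ 2 := by
  have h1 : Real.log 3 < 1.11 := log_three_lt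
  have h0 : 0 < Real.log 3 := Real.log_pos (by norm_num)
  have hπ : (3.141592 : ℝ) < π := Real.pi_gt_d6
  nlinarith

lemma beta_facts (κ : ℝ) (hκ : 0 ≤ κ) :
    κ < betaFn κ ∧ betaFn κ ≤ κ + 2 * Real.log 3 ^ 2 / π ^ 2 ∧
      π ^ 2 * (betaFn κ * (betaFn κ - κ)) = Real.log 3 ^ 2 * (2 * betaFn κ - κ) := by
  have hπ : 0 < π := Real.pi_pos
  have hπ2 : (0:ℝ) < π ^ 2 := by positivity
  have hl : 0 < Real.log 3 := Real.log_pos (by norm_num)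
  set l := Real.log 3 with hldef
  set s := Real.sqrt (π ^ 4 * κ ^ 2 + 4 * l ^ 4) with hs
  have hs2 : s ^ 2 = π ^ 4 * κ ^ 2 + 4 * l ^ 4 := Real.sq_sqrt (by positivity)
  have hslb : π ^ 2 * κ ≤ s := by
    have h1 : Real.sqrt (π ^ 4 * κ ^ 2) ≤ s :=
      Real.sqrt_le_sqrt (by nlinarith [pow_pos hl 4])
    have h2 : Real.sqrt (π ^ 4 * κ ^ 2) = π ^ 2 * κ := by
      rw [show π ^ 4 * κ ^ 2 = (π ^ 2 * κ) ^ 2 by ring, Real.sqrt_sq (by positivity)]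
    linarith
  have hsub : s ≤ π ^ 2 * κ + 2 * l ^ 2 := by
    have hx : (0:ℝ) ≤ π ^ 2 * κ * l ^ 2 := by positivity
    have h1 : s ≤ Real.sqrt ((π ^ 2 * κ + 2 * l ^ 2) ^ 2) :=
      Real.sqrt_le_sqrt (by nlinarith)
    rwa [Real.sqrt_sq (by positivity)] at h1
  have hb : 2 * π ^ 2 * betaFn κ = π ^ 2 * κ + s + 2 * l ^ 2 := by
    rw [betaFn]; field_simp
    rw [hs, hldef]
  refine ⟨?_, ?_, ?_⟩
  · nlinarith
  · rw [← sub_nonneg, show κ + 2 * l ^ 2 / π ^ 2 - betaFn κ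
        = (2 * π ^ 2 * κ + 4 * l ^ 2 - 2 * π ^ 2 * betaFn κ) / (2 * π ^ 2) by field_simp; ring]
    apply div_nonneg _ (by positivity)
    linarith
  · have hseq : (2 * π ^ 2 * betaFn κ - π ^ 2 * κ - 2 * l ^ 2) ^ 2 = π ^ 4 * κ ^ 2 + 4 * l ^ 4 := by
      rw [show 2 * π ^ 2 * betaFn κ - π ^ 2 * κ - 2 * l ^ 2 = s by linarith]; exact hs2
    have h4 : (4 * π ^ 2) * (π ^ 2 * (betaFn κ * (betaFn κ - κ))) =
        (4 * π ^ 2) * (l ^ 2 * (2 * betaFn κ - κ)) := by nlinarith [hseq]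
    exact mul_left_cancel₀ (by positivity) h4

lemma beta_bounds (κ : ℝ) (hκ : 0 ≤ κ) : κ < betaFn κ ∧ betaFn κ < κ + 1 / 4 := by
  obtain ⟨h1, h2, _⟩ := beta_facts κ hκ
  have h3 : 8 * Real.log 3 ^ 2 < π ^ 2 := eight_lsq_lt
  have hπ2 : (0:ℝ) < π ^ 2 := by positivity
  constructor
  · exact h1
  · have : 2 * Real.log 3 ^ 2 / π ^ 2 < 1 / 4 := by
      rw [div_lt_iff₀ hπ2]; nlinarith
    linarith

lemma cot_deriv_eq (q s c : ℝ) (h1 : s ^ 2 + c ^ 2 = 1) :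
    (-s * q * s - c * (c * q)) / s ^ 2 = -q / s ^ 2 := by
  have hnum : -s * q * s - c * (c * q) = -q := by linear_combination (-q) * h1
  rw [hnum]

lemma cot_identity (p x s c f W : ℝ) (hx : x ≠ 0) (hs : s ≠ 0) (h1 : s ^ 2 + c ^ 2 = 1) :
    f ^ 2 / x - (p * (-(p / x) / s ^ 2) * W ^ 2 + p * (c / s) * (2 * W * (f / x)))
        - p ^ 2 * (W ^ 2 / x)
      = (f * s - p * c * W) ^ 2 / (x * s ^ 2) := by
  field_simp
  ring_nf
  linear_combination (-(p ^ 2 * W ^ 2)) * h1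

lemma absQ_bound (p s c w : ℝ) (hp : 0 < p) (hs : 0 < s) (hc : |c| ≤ 1) :
    |p * (c / s) * w ^ 2| ≤ p * (w ^ 2 / s) := by
  rw [abs_mul, abs_mul, abs_div, abs_of_pos hp, abs_of_pos hs, abs_of_nonneg (sq_nonneg w)]
  calc p * (|c| / s) * w ^ 2 ≤ p * (1 / s) * w ^ 2 := by gcongr
    _ = p * (w ^ 2 / s) := by ring

set_option maxHeartbeats 1000000 in
lemma wirtinger_core (r₁ r₂ : ℝ) (hr : 0 < r₁) (h12 : r₁ < r₂)
    (f f' : ℝ → ℝ)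
    (hderiv : ∀ r ∈ Icc r₁ r₂, HasDerivAt f (f' r) r)
    (hint1 : IntervalIntegrable f' volume r₁ r₂)
    (hint2 : IntervalIntegrable (fun r => f' r ^ 2 * r) volume r₁ r₂)
    (hmean : (∫ r in r₁..r₂, f r / r) = 0) :
    ∫ r in r₁..r₂, f r ^ 2 / r
      ≤ (Real.log (r₂ / r₁) / π) ^ 2 * ∫ r in r₁..r₂, f' r ^ 2 * r := by
  have hπ : (0:ℝ) < π := Real.pi_pos
  set L := Real.log (r₂ / r₁) with hLdef
  have hL : 0 < L := Real.log_pos ((one_lt_div hr).2 h12)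
  have hr₂ : 0 < r₂ := hr.trans h12
  have hfc : ContinuousOn f (Icc r₁ r₂) := fun r hrm =>
    (hderiv r hrm).continuousAt.continuousWithinAt
  have hne : ∀ r ∈ Icc r₁ r₂, r ≠ 0 := fun r hrm => (hr.trans_le hrm.1).ne'
  have hwc : ContinuousOn (fun s => f s / s) (Icc r₁ r₂) :=
    hfc.div continuousOn_id hne
  have huIcc : uIcc r₁ r₂ = Icc r₁ r₂ := uIcc_of_le h12.le
  have hCI : ∀ {h : ℝ → ℝ}, ContinuousOn h (Icc r₁ r₂) →
      IntervalIntegrable h volume r₁ r₂ := by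
    intro h hc
    apply ContinuousOn.intervalIntegrable
    rwa [huIcc]
  have hCIsub : ∀ {h : ℝ → ℝ}, ContinuousOn h (Icc r₁ r₂) → ∀ a b, a ∈ Icc r₁ r₂ →
      b ∈ Icc r₁ r₂ → IntervalIntegrable h volume a b := by
    intro h hc a b ha hb
    rw [← huIcc] at ha hb
    exact (hCI hc).mono_set (uIcc_subset_uIcc ha hb)
  -- the primitive W
  set W : ℝ → ℝ := fun x => ∫ s in r₁..x, f s / s with hWdef
  have hW1 : W r₁ = 0 := intervalIntegral.integral_same
  have hW2 : W r₂ = 0 := hmean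
  have hWcont : ContinuousOn W (Icc r₁ r₂) := by
    have h1 : IntegrableOn (fun s => f s / s) (uIcc r₁ r₂) volume := by
      rw [huIcc]
      exact (intervalIntegrable_iff_integrableOn_Icc_of_le h12.le).1 (hCI hwc)
    have := intervalIntegral.continuousOn_primitive_interval (a := r₁) (b := r₂)
      (μ := volume) h1
    rwa [huIcc] at this
  have hWd : ∀ r ∈ Ioo r₁ r₂, HasDerivAt W (f r / r) r := by
    intro r hrm
    have hIoo : ContinuousOn (fun s => f s / s) (Ioo r₁ r₂) := hwc.mono Ioo_subset_Icc_self
    exact intervalIntegral.integral_hasDerivAt_right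
      (hCIsub hwc r₁ r (left_mem_Icc.2 h12.le) (Ioo_subset_Icc_self hrm))
      (hIoo.stronglyMeasurableAtFilter isOpen_Ioo r hrm)
      (hIoo.continuousAt (isOpen_Ioo.mem_nhds hrm))
  -- bound on f and W
  obtain ⟨M, hM⟩ := isCompact_Icc.exists_bound_of_continuousOn hfc
  have hM0 : 0 ≤ M := le_trans (norm_nonneg (f r₁)) (hM r₁ (left_mem_Icc.2 h12.le))
  set C := M / r₁ with hCdef
  have hC0 : 0 ≤ C := div_nonneg hM0 hr.le
  have hWb1 : ∀ a ∈ Icc r₁ r₂, |W a| ≤ C * (a - r₁) := by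
    intro a ha
    have key : ‖∫ s in r₁..a, f s / s‖ ≤ C * |a - r₁| := by
      apply intervalIntegral.norm_integral_le_of_norm_le_const
      intro x hx
      rw [uIoc_of_le ha.1] at hx
      have hx1 : x ∈ Icc r₁ r₂ := ⟨hx.1.le, hx.2.trans ha.2⟩
      have hxpos : 0 < x := hr.trans_le hx1.1
      rw [Real.norm_eq_abs, abs_div, abs_of_pos hxpos]
      exact div_le_div₀ hM0 (hM x hx1) hr hx1.1
    rwa [Real.norm_eq_abs, abs_of_nonneg (sub_nonneg.2 ha.1)] at key
  have hWb2 : ∀ b ∈ Icc r₁ r₂, |W b| ≤ C * (r₂ - b) := by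
    intro b hb
    have hsplit : W b + ∫ s in b..r₂, f s / s = W r₂ :=
      intervalIntegral.integral_add_adjacent_intervals
        (hCIsub hwc r₁ b (left_mem_Icc.2 h12.le) hb)
        (hCIsub hwc b r₂ hb (right_mem_Icc.2 h12.le))
    have hWbv : W b = - ∫ s in b..r₂, f s / s := by rw [hW2] at hsplit; linarith
    have key : ‖∫ s in b..r₂, f s / s‖ ≤ C * |r₂ - b| := by
      apply intervalIntegral.norm_integral_le_of_norm_le_const
      intro x hx
      rw [uIoc_of_le hb.2] at hx
      have hx1 : x ∈ Icc r₁ r₂ := ⟨hb.1.trans hx.1.le, hx.2⟩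
      have hxpos : 0 < x := hr.trans_le hx1.1
      rw [Real.norm_eq_abs, abs_div, abs_of_pos hxpos]
      exact div_le_div₀ hM0 (hM x hx1) hr hx1.1
    rw [hWbv, abs_neg]
    rwa [Real.norm_eq_abs, abs_of_nonneg (sub_nonneg.2 hb.2)] at key
  -- the phase φ
  set φ : ℝ → ℝ := fun r => (π / L) * (Real.log r - Real.log r₁) with hφdef
  have hφd : ∀ r : ℝ, 0 < r → HasDerivAt φ (π / (L * r)) r := by
    intro r hr0
    have h1 : HasDerivAt (fun x : ℝ => Real.log x - Real.log r₁) r⁻¹ r :=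
      (Real.hasDerivAt_log hr0.ne').sub_const _
    have h2 := h1.const_mul (π / L)
    exact h2.congr_deriv (by ring)
  have hφ1 : φ r₁ = 0 := by simp [hφdef]
  have hlogdiff : Real.log r₂ - Real.log r₁ = L := by
    rw [hLdef, Real.log_div hr₂.ne' hr.ne']
  have hφ2 : φ r₂ = π := by
    rw [hφdef]; dsimp only; rw [hlogdiff]; field_simp
  have hφmem : ∀ r ∈ Ioo r₁ r₂, φ r ∈ Ioo 0 π := by
    intro r hrm
    have h1 : Real.log r₁ < Real.log r := Real.log_lt_log hr hrm.1
    have h2 : Real.log r < Real.log r₂ := Real.log_lt_log (hr.trans hrm.1) hrm.2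
    constructor
    · have : (0:ℝ) < π / L := by positivity
      simp only [hφdef]; nlinarith
    · have h3 : φ r < φ r₂ := by
        simp only [hφdef]
        have : (0:ℝ) < π / L := by positivity
        nlinarith
      rwa [hφ2] at h3
  have hsinpos : ∀ r ∈ Ioo r₁ r₂, 0 < Real.sin (φ r) := fun r hrm =>
    Real.sin_pos_of_pos_of_lt_pi (hφmem r hrm).1 (hφmem r hrm).2
  have hφcont : ContinuousOn φ (Icc r₁ r₂) := by
    apply ContinuousOn.mul continuousOn_const
    apply ContinuousOn.sub _ continuousOn_const
    exact Real.continuousOn_log.mono (fun x hx => hne x hx)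
  -- Q and its derivative
  set Q : ℝ → ℝ := fun r => (π / L) * (Real.cos (φ r) / Real.sin (φ r)) * W r ^ 2 with hQdef
  set Qd : ℝ → ℝ := fun r => (π / L) * (-(π / (L * r)) / Real.sin (φ r) ^ 2) * W r ^ 2
      + (π / L) * (Real.cos (φ r) / Real.sin (φ r)) * (2 * W r * (f r / r)) with hQddef
  have hQd : ∀ r ∈ Ioo r₁ r₂, HasDerivAt Q (Qd r) r := by
    intro r hrm
    have hr0 : 0 < r := hr.trans hrm.1
    have hsin := hsinpos r hrm
    have hcos' : HasDerivAt (fun x => Real.cos (φ x)) (-Real.sin (φ r) * (π / (L * r))) r :=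
      (Real.hasDerivAt_cos (φ r)).comp r (hφd r hr0)
    have hsin' : HasDerivAt (fun x => Real.sin (φ x)) (Real.cos (φ r) * (π / (L * r))) r :=
      (Real.hasDerivAt_sin (φ r)).comp r (hφd r hr0)
    have hcot : HasDerivAt (fun x => Real.cos (φ x) / Real.sin (φ x))
        (-(π / (L * r)) / Real.sin (φ r) ^ 2) r := by
      have h3 := hcos'.div hsin' hsin.ne'
      exact h3.congr_deriv (cot_deriv_eq (π / (L * r)) _ _ (Real.sin_sq_add_cos_sq (φ r)))
    have hW2d : HasDerivAt (fun x => W x ^ 2) (2 * W r * (f r / r)) r := by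
      have := (hWd r hrm).pow 2
      exact this.congr_deriv (by norm_num)
    have h4 := (hcot.const_mul (π / L)).mul hW2d
    exact h4
  -- main two-sided inequality on interior subintervals
  set I := ∫ r in r₁..r₂, f r ^ 2 / r with hI
  have hIcont : ContinuousOn (fun r => f r ^ 2 / r) (Icc r₁ r₂) :=
    ((hfc.pow 2).div continuousOn_id hne)
  have hWsqc : ContinuousOn (fun r => W r ^ 2 / r) (Icc r₁ r₂) :=
    ((hWcont.pow 2).div continuousOn_id hne)
  have hInn : ∀ a b, a ∈ Icc r₁ r₂ → b ∈ Icc r₁ r₂ → a ≤ b →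
      0 ≤ ∫ r in a..b, f r ^ 2 / r := by
    intro a b ha hb hle
    apply intervalIntegral.integral_nonneg hle
    intro x hx
    have : 0 < x := hr.trans_le (ha.1.trans hx.1)
    positivity
  have hab : ∀ a b, a ∈ Ioo r₁ r₂ → b ∈ Ioo r₁ r₂ → a ≤ b →
      (π / L) ^ 2 * ∫ r in a..b, W r ^ 2 / r ≤ I - (Q b - Q a) := by
    intro a b ha hb hle
    have haI : a ∈ Icc r₁ r₂ := Ioo_subset_Icc_self ha
    have hbI : b ∈ Icc r₁ r₂ := Ioo_subset_Icc_self hb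
    have hIccsub : Icc a b ⊆ Ioo r₁ r₂ := fun x hx => ⟨ha.1.trans_le hx.1, hx.2.trans_lt hb.2⟩
    have hIccsub' : Icc a b ⊆ Icc r₁ r₂ := hIccsub.trans Ioo_subset_Icc_self
    have huab : uIcc a b = Icc a b := uIcc_of_le hle
    have hsinc : ContinuousOn (fun r => Real.sin (φ r)) (Icc a b) :=
      Real.continuous_sin.comp_continuousOn (hφcont.mono hIccsub')
    have hcosc : ContinuousOn (fun r => Real.cos (φ r)) (Icc a b) :=
      Real.continuous_cos.comp_continuousOn (hφcont.mono hIccsub')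
    have hsinne : ∀ x ∈ Icc a b, Real.sin (φ x) ≠ 0 :=
      fun x hx => (hsinpos x (hIccsub hx)).ne'
    have hxne : ∀ x ∈ Icc a b, x ≠ 0 := fun x hx => hne x (hIccsub' hx)
    have hQdc : ContinuousOn Qd (Icc a b) := by
      apply ContinuousOn.add
      · apply ContinuousOn.mul
        · apply ContinuousOn.mul continuousOn_const
          apply ContinuousOn.div
          · apply ContinuousOn.neg
            apply ContinuousOn.div continuousOn_const
            · exact (continuousOn_const.mul continuousOn_id)
            · intro x hx
              have : x ≠ 0 := hxne x hx
              positivity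
          · exact hsinc.pow 2
          · intro x hx
            exact pow_ne_zero 2 (hsinne x hx)
        · exact (hWcont.mono hIccsub').pow 2
      · apply ContinuousOn.mul
        · exact continuousOn_const.mul (hcosc.div hsinc hsinne)
        · exact (continuousOn_const.mul (hWcont.mono hIccsub')).mul
            ((hfc.mono hIccsub').div continuousOn_id hxne)
    have hQint : IntervalIntegrable Qd volume a b := by
      apply ContinuousOn.intervalIntegrable; rwa [huab]
    have hFTC : ∫ r in a..b, Qd r = Q b - Q a := by
      apply intervalIntegral.integral_eq_sub_of_hasDerivAt
      · intro x hx
        rw [huab] at hx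
        exact hQd x (hIccsub hx)
      · exact hQint
    have hmono : ∫ r in a..b, (π / L) ^ 2 * (W r ^ 2 / r)
        ≤ ∫ r in a..b, (f r ^ 2 / r - Qd r) := by
      apply intervalIntegral.integral_mono_on hle
      · apply ContinuousOn.intervalIntegrable
        rw [huab]
        exact continuousOn_const.mul (hWsqc.mono hIccsub')
      · apply ContinuousOn.intervalIntegrable
        rw [huab]
        exact (hIcont.mono hIccsub').sub hQdc
      · intro x hx
        have hx' : x ∈ Ioo r₁ r₂ := hIccsub hx
        have hx0 : 0 < x := hr.trans hx'.1
        have hs := hsinpos x hx'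
        have heq : f x ^ 2 / x - Qd x - (π / L) ^ 2 * (W x ^ 2 / x)
            = (f x * Real.sin (φ x) - (π / L) * Real.cos (φ x) * W x) ^ 2
              / (x * Real.sin (φ x) ^ 2) := by
          have h2 := cot_identity (π / L) x (Real.sin (φ x)) (Real.cos (φ x)) (f x) (W x)
            hx0.ne' hs.ne' (Real.sin_sq_add_cos_sq (φ x))
          rw [div_div] at h2
          exact h2
        have h2 : 0 ≤ (f x * Real.sin (φ x) - (π / L) * Real.cos (φ x) * W x) ^ 2
              / (x * Real.sin (φ x) ^ 2) := by positivity
        linarith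
    have hsub : ∫ r in a..b, (f r ^ 2 / r - Qd r)
        = (∫ r in a..b, f r ^ 2 / r) - (Q b - Q a) := by
      rw [intervalIntegral.integral_sub (hCIsub hIcont a b haI hbI) hQint, hFTC]
    have hmid : ∫ r in a..b, f r ^ 2 / r ≤ I := by
      have i1 := hCIsub hIcont r₁ a (left_mem_Icc.2 h12.le) haI
      have i2 := hCIsub hIcont a b haI hbI
      have i3 := hCIsub hIcont b r₂ hbI (right_mem_Icc.2 h12.le)
      have e1 : (∫ r in r₁..a, f r ^ 2 / r) + (∫ r in a..b, f r ^ 2 / r)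
          = ∫ r in r₁..b, f r ^ 2 / r :=
        intervalIntegral.integral_add_adjacent_intervals i1 i2
      have e2 : (∫ r in r₁..b, f r ^ 2 / r) + (∫ r in b..r₂, f r ^ 2 / r) = I :=
        intervalIntegral.integral_add_adjacent_intervals (i1.trans i2) i3
      have n1 := hInn r₁ a (left_mem_Icc.2 h12.le) haI ha.1.le
      have n3 := hInn b r₂ hbI (right_mem_Icc.2 h12.le) hb.2.le
      linarith
    rw [intervalIntegral.integral_const_mul] at hmono
    linarith
  -- boundary limits
  have hQa : Tendsto Q (𝓝[>] r₁) (𝓝 0) := by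
    have hsd : HasDerivAt (fun x => Real.sin (φ x)) (π / (L * r₁)) r₁ := by
      have := (Real.hasDerivAt_sin (φ r₁)).comp r₁ (hφd r₁ hr)
      rwa [hφ1, Real.cos_zero, one_mul] at this
    have hslope : Tendsto (fun a => Real.sin (φ a) / (a - r₁)) (𝓝[>] r₁)
        (𝓝 (π / (L * r₁))) := by
      have h1 := hasDerivAt_iff_tendsto_slope.1 hsd
      have h2 : (fun a => Real.sin (φ a) / (a - r₁)) = slope (fun x => Real.sin (φ x)) r₁ := by
        funext a
        rw [slope_def_field, hφ1, Real.sin_zero, sub_zero]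
      rw [h2]
      refine h1.mono_left (nhdsWithin_mono _ ?_)
      intro x hx
      simp only [mem_compl_iff, mem_singleton_iff]
      exact ne_of_gt hx
    have hinv : Tendsto (fun a => (a - r₁) / Real.sin (φ a)) (𝓝[>] r₁)
        (𝓝 (L * r₁ / π)) := by
      have h1 := hslope.inv₀ (by positivity)
      have h2 : (fun a => (Real.sin (φ a) / (a - r₁))⁻¹)
          = fun a => (a - r₁) / Real.sin (φ a) := by
        funext a; rw [inv_div]
      rw [h2] at h1
      convert h1 using 2
      rw [inv_div]
    have hlin : Tendsto (fun a : ℝ => (π / L) * C ^ 2 * (a - r₁)) (𝓝[>] r₁) (𝓝 0) := by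
      have h1 := (continuous_const.mul (continuous_id.sub continuous_const)).tendsto r₁
        (f := fun a : ℝ => (π / L) * C ^ 2 * (a - r₁))
      simp only [sub_self, mul_zero] at h1
      exact h1.mono_left nhdsWithin_le_nhds
    have hzero : Tendsto (fun a => ((π / L) * C ^ 2 * (a - r₁)) * ((a - r₁) / Real.sin (φ a)))
        (𝓝[>] r₁) (𝓝 0) := by
      have := hlin.mul hinv
      rwa [zero_mul] at this
    apply squeeze_zero_norm' ?_ hzero
    filter_upwards [Ioo_mem_nhdsGT h12] with a ha
    have hsina := hsinpos a ha
    have haI := Ioo_subset_Icc_self ha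
    have hWb := hWb1 a haI
    have ha0 : (0:ℝ) ≤ a - r₁ := sub_nonneg.2 haI.1
    have hWsq : W a ^ 2 ≤ C ^ 2 * (a - r₁) ^ 2 := by
      nlinarith [hWb, sq_abs (W a), abs_nonneg (W a)]
    have hπL : (0:ℝ) < π / L := by positivity
    rw [Real.norm_eq_abs]
    have hQabs : |Q a| ≤ (π / L) * (W a ^ 2 / Real.sin (φ a)) := by
      simp only [hQdef]
      exact absQ_bound _ _ _ _ hπL hsina (Real.abs_cos_le_one _)
    calc |Q a| ≤ (π / L) * (W a ^ 2 / Real.sin (φ a)) := hQabs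
      _ ≤ (π / L) * ((C ^ 2 * (a - r₁) ^ 2) / Real.sin (φ a)) := by gcongr
      _ = ((π / L) * C ^ 2 * (a - r₁)) * ((a - r₁) / Real.sin (φ a)) := by ring
  have hQb : Tendsto Q (𝓝[<] r₂) (𝓝 0) := by
    have hsd : HasDerivAt (fun x => Real.sin (φ x)) (-(π / (L * r₂))) r₂ := by
      have := (Real.hasDerivAt_sin (φ r₂)).comp r₂ (hφd r₂ hr₂)
      rwa [hφ2, Real.cos_pi, neg_one_mul] at this
    have hslope : Tendsto (fun b => Real.sin (φ b) / (b - r₂)) (𝓝[<] r₂)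
        (𝓝 (-(π / (L * r₂)))) := by
      have h1 := hasDerivAt_iff_tendsto_slope.1 hsd
      have h2 : (fun b => Real.sin (φ b) / (b - r₂)) = slope (fun x => Real.sin (φ x)) r₂ := by
        funext b
        rw [slope_def_field, hφ2, Real.sin_pi, sub_zero]
      rw [h2]
      refine h1.mono_left (nhdsWithin_mono _ ?_)
      intro x hx
      simp only [mem_compl_iff, mem_singleton_iff]
      exact ne_of_lt hx
    have hinv : Tendsto (fun b => (r₂ - b) / Real.sin (φ b)) (𝓝[<] r₂)
        (𝓝 (L * r₂ / π)) := by
      have hne0 : -(π / (L * r₂)) ≠ 0 := by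
        have : (0:ℝ) < π / (L * r₂) := by positivity
        linarith [this]
      have h1 := (hslope.inv₀ hne0).neg
      have h2 : (fun b => -((Real.sin (φ b) / (b - r₂))⁻¹))
          = fun b => (r₂ - b) / Real.sin (φ b) := by
        funext b
        rw [inv_div, ← neg_div, neg_sub]
      rw [h2] at h1
      convert h1 using 1
      rw [inv_neg, neg_neg, inv_div]
    have hlin : Tendsto (fun b : ℝ => (π / L) * C ^ 2 * (r₂ - b)) (𝓝[<] r₂) (𝓝 0) := by
      have h1 := (continuous_const.mul (continuous_const.sub continuous_id)).tendsto r₂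
        (f := fun b : ℝ => (π / L) * C ^ 2 * (r₂ - b))
      simp only [sub_self, mul_zero] at h1
      exact h1.mono_left nhdsWithin_le_nhds
    have hzero : Tendsto (fun b => ((π / L) * C ^ 2 * (r₂ - b)) * ((r₂ - b) / Real.sin (φ b)))
        (𝓝[<] r₂) (𝓝 0) := by
      have := hlin.mul hinv
      rwa [zero_mul] at this
    apply squeeze_zero_norm' ?_ hzero
    filter_upwards [Ioo_mem_nhdsLT h12] with b hb
    have hsinb := hsinpos b hb
    have hbI := Ioo_subset_Icc_self hb
    have hWb := hWb2 b hbI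
    have hb0 : (0:ℝ) ≤ r₂ - b := sub_nonneg.2 hbI.2
    have hWsq : W b ^ 2 ≤ C ^ 2 * (r₂ - b) ^ 2 := by
      nlinarith [hWb, sq_abs (W b), abs_nonneg (W b)]
    have hπL : (0:ℝ) < π / L := by positivity
    rw [Real.norm_eq_abs]
    have hQabs : |Q b| ≤ (π / L) * (W b ^ 2 / Real.sin (φ b)) := by
      simp only [hQdef]
      exact absQ_bound _ _ _ _ hπL hsinb (Real.abs_cos_le_one _)
    calc |Q b| ≤ (π / L) * (W b ^ 2 / Real.sin (φ b)) := hQabs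
      _ ≤ (π / L) * ((C ^ 2 * (r₂ - b) ^ 2) / Real.sin (φ b)) := by gcongr
      _ = ((π / L) * C ^ 2 * (r₂ - b)) * ((r₂ - b) / Real.sin (φ b)) := by ring
  -- Dirichlet-type inequality by passing to the limit
  set IW := ∫ r in r₁..r₂, W r ^ 2 / r with hIWdef
  have hDir : (π / L) ^ 2 * IW ≤ I := by
    set lf := (𝓝[>] r₁) ×ˢ (𝓝[<] r₂) with hlf
    haveI hbot : lf.NeBot := Filter.NeBot.prod inferInstance inferInstance
    set G : ℝ → ℝ := fun x => ∫ r in r₁..x, W r ^ 2 / r with hGdef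
    have hGc : ContinuousOn G (Icc r₁ r₂) := by
      have h1 : IntegrableOn (fun r => W r ^ 2 / r) (uIcc r₁ r₂) volume := by
        rw [huIcc]
        exact (intervalIntegrable_iff_integrableOn_Icc_of_le h12.le).1 (hCI hWsqc)
      have := intervalIntegral.continuousOn_primitive_interval (a := r₁) (b := r₂)
        (μ := volume) h1
      rwa [huIcc] at this
    have hGa : Tendsto G (𝓝[>] r₁) (𝓝 0) := by
      have h1 := (hGc r₁ (left_mem_Icc.2 h12.le)).tendsto
      have h2 : G r₁ = 0 := intervalIntegral.integral_same
      rw [h2] at h1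
      refine h1.mono_left ?_
      rw [← nhdsWithin_Ioo_eq_nhdsGT h12]
      exact nhdsWithin_mono _ Ioo_subset_Icc_self
    have hGb : Tendsto G (𝓝[<] r₂) (𝓝 IW) := by
      have h1 := (hGc r₂ (right_mem_Icc.2 h12.le)).tendsto
      have h2 : G r₂ = IW := rfl
      rw [h2] at h1
      refine h1.mono_left ?_
      rw [← nhdsWithin_Ioo_eq_nhdsLT h12]
      exact nhdsWithin_mono _ Ioo_subset_Icc_self
    have hS : Tendsto (fun p : ℝ × ℝ => (π / L) ^ 2 * (G p.2 - G p.1)) lf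
        (𝓝 ((π / L) ^ 2 * (IW - 0))) :=
      tendsto_const_nhds.mul ((hGb.comp tendsto_snd).sub (hGa.comp tendsto_fst))
    have hT : Tendsto (fun p : ℝ × ℝ => I - (Q p.2 - Q p.1)) lf (𝓝 (I - (0 - 0))) :=
      tendsto_const_nhds.sub ((hQb.comp tendsto_snd).sub (hQa.comp tendsto_fst))
    have hev : ∀ᶠ p : ℝ × ℝ in lf, (π / L) ^ 2 * (G p.2 - G p.1) ≤ I - (Q p.2 - Q p.1) := by
      set m := (r₁ + r₂) / 2 with hm
      have hm1 : r₁ < m := by rw [hm]; linarith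
      have hm2 : m < r₂ := by rw [hm]; linarith
      have hmem : (Ioo r₁ m) ×ˢ (Ioo m r₂) ∈ lf := by
        rw [hlf]
        exact prod_mem_prod (Ioo_mem_nhdsGT_of_mem ⟨le_refl r₁, hm1⟩)
          (Ioo_mem_nhdsLT_of_mem ⟨hm2, le_refl r₂⟩)
      filter_upwards [hmem] with p hp
      obtain ⟨hp1, hp2⟩ := hp
      have ha : p.1 ∈ Ioo r₁ r₂ := ⟨hp1.1, hp1.2.trans hm2⟩
      have hb : p.2 ∈ Ioo r₁ r₂ := ⟨hm1.trans hp2.1, hp2.2⟩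
      have hle : p.1 ≤ p.2 := (hp1.2.trans hp2.1).le
      have h1 := hab p.1 p.2 ha hb hle
      have h2 : G p.2 - G p.1 = ∫ r in p.1..p.2, W r ^ 2 / r :=
        intervalIntegral.integral_interval_sub_left
          (hCIsub hWsqc r₁ p.2 (left_mem_Icc.2 h12.le) (Ioo_subset_Icc_self hb))
          (hCIsub hWsqc r₁ p.1 (left_mem_Icc.2 h12.le) (Ioo_subset_Icc_self ha))
      rw [h2]
      exact h1
    have hfin := le_of_tendsto_of_tendsto hS hT hev
    simpa using hfin
  -- integration by parts and AM-GM
  have hWbd : ∀ x ∈ Icc r₁ r₂, |W x| ≤ C * (r₂ - r₁) := by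
    intro x hx
    refine (hWb1 x hx).trans ?_
    have := hx.2
    nlinarith
  have hf'aesm : AEStronglyMeasurable f' (volume.restrict (uIoc r₁ r₂)) := by
    rw [uIoc_of_le h12.le]
    exact hint1.aestronglyMeasurable
  have hWf'int : IntervalIntegrable (fun r => W r * f' r) volume r₁ r₂ := by
    apply IntervalIntegrable.mono_fun (hint1.const_mul (C * (r₂ - r₁)))
    · apply AEStronglyMeasurable.mul _ hf'aesm
      rw [uIoc_of_le h12.le]
      exact (hWcont.mono Ioc_subset_Icc_self).aestronglyMeasurable measurableSet_Ioc
    · rw [uIoc_of_le h12.le]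
      filter_upwards [ae_restrict_mem measurableSet_Ioc] with x hx
      rw [Real.norm_eq_abs, Real.norm_eq_abs, abs_mul, abs_mul]
      have h1 := hWbd x (Ioc_subset_Icc_self hx)
      have h2 : |C * (r₂ - r₁)| = C * (r₂ - r₁) := abs_of_nonneg (by nlinarith)
      rw [h2]
      exact mul_le_mul_of_nonneg_right h1 (abs_nonneg _)
  have hIBP : I = - ∫ r in r₁..r₂, W r * f' r := by
    have hFd : ∀ x ∈ Ioo r₁ r₂, HasDerivAt (fun y => W y * f y) (f x / x * f x + W x * f' x) x :=
      fun x hx => (hWd x hx).mul (hderiv x (Ioo_subset_Icc_self hx))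
    have hprod_int : IntervalIntegrable (fun x => f x / x * f x) volume r₁ r₂ :=
      hCI (hwc.mul hfc)
    have hsum : IntervalIntegrable (fun x => f x / x * f x + W x * f' x) volume r₁ r₂ :=
      hprod_int.add hWf'int
    have hFTC := intervalIntegral.integral_eq_sub_of_hasDerivAt_of_le h12.le
      (hWcont.mul hfc) hFd hsum
    have h0 : ∫ x in r₁..r₂, (f x / x * f x + W x * f' x) = 0 := by
      rw [hFTC]
      simp [hW1, hW2]
    rw [intervalIntegral.integral_add hprod_int hWf'int] at h0
    have hcongr : ∫ x in r₁..r₂, f x / x * f x = I := by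
      rw [hI]
      apply intervalIntegral.integral_congr
      intro x hx
      simp only
      ring
    rw [hcongr] at h0
    linarith
  set D := ∫ r in r₁..r₂, f' r ^ 2 * r with hDdef
  have ht : (0:ℝ) < (π / L) ^ 2 := by positivity
  have habs : I ≤ ((π / L) ^ 2 * IW + D / (π / L) ^ 2) / 2 := by
    have h1 : I ≤ ∫ r in r₁..r₂, |W r * f' r| := by
      rw [hIBP]
      have h2 : ‖∫ r in r₁..r₂, W r * f' r‖ ≤ ∫ r in r₁..r₂, ‖W r * f' r‖ :=
        intervalIntegral.norm_integral_le_integral_norm h12.le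
      rw [Real.norm_eq_abs] at h2
      have h3 : (∫ r in r₁..r₂, ‖W r * f' r‖) = ∫ r in r₁..r₂, |W r * f' r| := by
        apply intervalIntegral.integral_congr
        intro x _
        exact Real.norm_eq_abs _
      rw [h3] at h2
      calc -(∫ r in r₁..r₂, W r * f' r) ≤ |∫ r in r₁..r₂, W r * f' r| := neg_le_abs _
        _ ≤ ∫ r in r₁..r₂, |W r * f' r| := h2
    have h2 : ∫ r in r₁..r₂, |W r * f' r|
        ≤ ∫ r in r₁..r₂, ((π / L) ^ 2 * (W r ^ 2 / r) + f' r ^ 2 * r / (π / L) ^ 2) / 2 := by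
      apply intervalIntegral.integral_mono_ae_restrict h12.le hWf'int.abs
        ((((hCI hWsqc).const_mul _).add (hint2.div_const _)).div_const 2)
      filter_upwards [ae_restrict_mem measurableSet_Icc] with x hx
      have hx0 : 0 < x := hr.trans_le hx.1
      have e : ((π / L) ^ 2 * (W x ^ 2 / x) + f' x ^ 2 * x / (π / L) ^ 2) / 2 - |W x * f' x|
          = ((π / L) ^ 2 * |W x| - x * |f' x|) ^ 2 / (2 * (π / L) ^ 2 * x) := by
        rw [abs_mul, ← sq_abs (W x), ← sq_abs (f' x)]
        field_simp
        ring_nf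
      have hpos : 0 ≤ ((π / L) ^ 2 * |W x| - x * |f' x|) ^ 2 / (2 * (π / L) ^ 2 * x) := by
        positivity
      linarith
    have h3 : ∫ r in r₁..r₂, ((π / L) ^ 2 * (W r ^ 2 / r) + f' r ^ 2 * r / (π / L) ^ 2) / 2
        = ((π / L) ^ 2 * IW + D / (π / L) ^ 2) / 2 := by
      rw [intervalIntegral.integral_div, intervalIntegral.integral_add
        ((hCI hWsqc).const_mul _) (hint2.div_const _), intervalIntegral.integral_const_mul,
        intervalIntegral.integral_div]
    linarith
  have h5 : D / (π / L) ^ 2 = (L / π) ^ 2 * D := by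
    field_simp
  have hgoal : I ≤ (L / π) ^ 2 * D := by
    rw [h5] at habs
    linarith
  exact hgoal

lemma ptwise1 (κ β ρ x c : ℝ) (hκ : 0 ≤ κ) (hβ : κ < β) (hρ0 : 0 ≤ ρ) (hρ1 : ρ ≤ 1) :
    κ / β * (ρ * c ^ 2) - κ / (β - κ) * (x - c) ^ 2 ≤ ρ * x ^ 2 := by
  have hβ0 : 0 < β := hκ.trans_lt hβ
  have hδ : 0 < β - κ := sub_pos.2 hβ
  have key : κ * (β - κ) * (ρ * c ^ 2) ≤ β * (β - κ) * (ρ * x ^ 2) + κ * β * (x - c) ^ 2 := by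
    nlinarith [mul_nonneg hρ0 (sq_nonneg ((β - κ) * x + κ * (x - c))),
      mul_nonneg (sub_nonneg.2 hρ1) (mul_nonneg (mul_nonneg hκ hβ0.le) (sq_nonneg (x - c)))]
  have hexp : κ / β * (ρ * c ^ 2) - κ / (β - κ) * (x - c) ^ 2
      = (κ * (β - κ) * (ρ * c ^ 2) - κ * β * (x - c) ^ 2) / (β * (β - κ)) := by
    field_simp
  rw [hexp, div_le_iff₀ (by positivity)]
  nlinarith [key]

set_option maxHeartbeats 2000000 in
/-- **One-dimensional projection bound** (Lemma 4.3).  Let `R > 0`, `I = (r₁,r₂)` with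
`r₁ ≥ R` and `r₂ - r₁ ≤ 2R`, and let `ρ ∈ L^∞(I)` with `0 ≤ ρ ≤ 1` a.e.  Then for every
`κ ∈ [0,1]` and every `u ∈ W^{1,2}(I, r dr)`,
`∫_I (κ|u'|² + ρ r⁻²|u|²) r dr ≥ (κ ρ̄ / β(κ)) ∫_I |u|² r⁻¹ dr`, where
`ρ̄ = (∫_I ρ/r)/(∫_I 1/r)`; moreover `κ < β(κ) < κ + 1/4` for all `κ ∈ [0,1]`. -/
theorem one_dimensional_projection_bound
    (R r₁ r₂ : ℝ) (hR : 0 < R) (hr₁ : R ≤ r₁) (hI : r₂ - r₁ ≤ 2 * R) (h12 : r₁ < r₂)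
    (ρ : ℝ → ℝ) (hmeas : Measurable ρ)
    (hbdd : ∀ᵐ r ∂(volume.restrict (Set.Ioo r₁ r₂)), 0 ≤ ρ r ∧ ρ r ≤ 1) :
    (∀ κ ∈ Set.Icc (0:ℝ) 1, ∀ u u' : ℝ → ℂ,
      (∀ r ∈ Set.Icc r₁ r₂, HasDerivAt u (u' r) r) →
      IntervalIntegrable (fun r => (‖u r‖ ^ 2 + ‖u' r‖ ^ 2) * r) volume r₁ r₂ →
      κ * ((∫ r in r₁..r₂, ρ r / r) / (∫ r in r₁..r₂, r⁻¹)) / betaFn κ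
          * ∫ r in r₁..r₂, ‖u r‖ ^ 2 / r
        ≤ ∫ r in r₁..r₂, (κ * ‖u' r‖ ^ 2 + ρ r / r ^ 2 * ‖u r‖ ^ 2) * r)
    ∧ ∀ κ ∈ Set.Icc (0:ℝ) 1, κ < betaFn κ ∧ betaFn κ < κ + 1 / 4 := by
  have hr : 0 < r₁ := lt_of_lt_of_le hR hr₁
  have hr₂ : 0 < r₂ := hr.trans h12
  have hπ : (0:ℝ) < π := Real.pi_pos
  have hl3 : 0 < Real.log 3 := Real.log_pos (by norm_num)
  refine ⟨?_, fun κ hκ => beta_bounds κ hκ.1⟩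
  intro κ hκ u u' hud huint
  obtain ⟨hβgt, hβle, hβid⟩ := beta_facts κ hκ.1
  set β := betaFn κ with hβdef
  have hβ0 : 0 < β := lt_of_le_of_lt hκ.1 hβgt
  have hδ0 : 0 < β - κ := sub_pos.2 hβgt
  have huIcc : uIcc r₁ r₂ = Icc r₁ r₂ := uIcc_of_le h12.le
  have hne : ∀ r ∈ Icc r₁ r₂, r ≠ 0 := fun r hrm => (hr.trans_le hrm.1).ne'
  have hCI : ∀ {h : ℝ → ℝ}, ContinuousOn h (Icc r₁ r₂) →
      IntervalIntegrable h volume r₁ r₂ := by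
    intro h hc
    apply ContinuousOn.intervalIntegrable
    rwa [huIcc]
  -- the logarithmic length
  have hLeq : (∫ r in r₁..r₂, r⁻¹) = Real.log (r₂ / r₁) := integral_inv_of_pos hr hr₂
  set L := ∫ r in r₁..r₂, (r:ℝ)⁻¹ with hLdef
  have hL : 0 < L := by rw [hLeq]; exact Real.log_pos ((one_lt_div hr).2 h12)
  have hLle : L ≤ Real.log 3 := by
    rw [hLeq]
    have h1 : r₂ / r₁ ≤ 3 := by
      rw [div_le_iff₀ hr]
      linarith
    have h2 : (0:ℝ) < r₂ / r₁ := by positivity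
    exact Real.log_le_log h2 h1
  -- components of u
  have hucont : ContinuousOn u (Icc r₁ r₂) := fun r hrm =>
    (hud r hrm).continuousAt.continuousWithinAt
  set f : ℝ → ℝ := fun r => (u r).re with hfdef
  set g : ℝ → ℝ := fun r => (u r).im with hgdef
  set f' : ℝ → ℝ := fun r => (u' r).re with hf'def
  set g' : ℝ → ℝ := fun r => (u' r).im with hg'def
  have hfd : ∀ r ∈ Icc r₁ r₂, HasDerivAt f (f' r) r := by
    intro r hrm
    exact (Complex.reCLM.hasFDerivAt (x := u r)).comp_hasDerivAt r (hud r hrm)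
  have hgd : ∀ r ∈ Icc r₁ r₂, HasDerivAt g (g' r) r := by
    intro r hrm
    exact (Complex.imCLM.hasFDerivAt (x := u r)).comp_hasDerivAt r (hud r hrm)
  have hnormsq : ∀ r, ‖u r‖ ^ 2 = f r ^ 2 + g r ^ 2 := by
    intro r
    rw [← Complex.normSq_eq_norm_sq, Complex.normSq_apply]
    simp only [hfdef, hgdef]
    ring
  have hnormsq' : ∀ r, ‖u' r‖ ^ 2 = f' r ^ 2 + g' r ^ 2 := by
    intro r
    rw [← Complex.normSq_eq_norm_sq, Complex.normSq_apply]
    simp only [hf'def, hg'def]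
    ring
  have hfc : ContinuousOn f (Icc r₁ r₂) := Complex.continuous_re.comp_continuousOn hucont
  have hgc : ContinuousOn g (Icc r₁ r₂) := Complex.continuous_im.comp_continuousOn hucont
  -- integrability of the derivative terms
  have hu2r_cont : ContinuousOn (fun r => ‖u r‖ ^ 2 * r) (Icc r₁ r₂) :=
    ((hucont.norm.pow 2).mul continuousOn_id)
  have hD_int : IntervalIntegrable (fun r => ‖u' r‖ ^ 2 * r) volume r₁ r₂ := by
    have h1 := huint.sub (hCI hu2r_cont)
    have heq : (fun r => (‖u r‖ ^ 2 + ‖u' r‖ ^ 2) * r - ‖u r‖ ^ 2 * r)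
        = fun r => ‖u' r‖ ^ 2 * r := funext fun r => by ring
    rwa [heq] at h1
  have hu'ae : u' =ᵐ[volume.restrict (Ioc r₁ r₂)] (fun r => deriv u r) := by
    have h1 : ∀ r ∈ Ioo r₁ r₂, u' r = deriv u r := fun r hrm =>
      ((hud r (Ioo_subset_Icc_self hrm)).deriv).symm
    rw [← Measure.restrict_congr_set Ioo_ae_eq_Ioc]
    exact (ae_restrict_mem measurableSet_Ioo).mono h1
  have hu'aesm : AEStronglyMeasurable u' (volume.restrict (Ioc r₁ r₂)) :=
    ((measurable_deriv u).aestronglyMeasurable).congr hu'ae.symm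
  have hf'aesm : AEStronglyMeasurable f' (volume.restrict (Ioc r₁ r₂)) :=
    Complex.continuous_re.comp_aestronglyMeasurable hu'aesm
  have hg'aesm : AEStronglyMeasurable g' (volume.restrict (Ioc r₁ r₂)) :=
    Complex.continuous_im.comp_aestronglyMeasurable hu'aesm
  have hsq_int : ∀ h' : ℝ → ℝ, AEStronglyMeasurable h' (volume.restrict (Ioc r₁ r₂)) →
      (∀ r, h' r ^ 2 ≤ ‖u' r‖ ^ 2) →
      IntervalIntegrable (fun r => h' r ^ 2 * r) volume r₁ r₂ := by
    intro h' haesm hle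
    apply hD_int.mono_fun
    · have h2 : AEStronglyMeasurable (fun r => h' r * h' r * r)
          (volume.restrict (uIoc r₁ r₂)) := by
        rw [uIoc_of_le h12.le]
        exact (haesm.mul haesm).mul aestronglyMeasurable_id
      apply h2.congr
      apply Eventually.of_forall
      intro x
      ring
    · rw [uIoc_of_le h12.le]
      filter_upwards [ae_restrict_mem measurableSet_Ioc] with x hx
      have hx0 : (0:ℝ) ≤ x := (hr.trans hx.1).le
      rw [Real.norm_eq_abs, Real.norm_eq_abs,
        abs_of_nonneg (by positivity : (0:ℝ) ≤ h' x ^ 2 * x),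
        abs_of_nonneg (by positivity : (0:ℝ) ≤ ‖u' x‖ ^ 2 * x)]
      exact mul_le_mul_of_nonneg_right (hle x) hx0
  have hf'2r_int : IntervalIntegrable (fun r => f' r ^ 2 * r) volume r₁ r₂ :=
    hsq_int f' hf'aesm (fun r => by rw [hnormsq' r]; nlinarith [sq_nonneg (g' r)])
  have hg'2r_int : IntervalIntegrable (fun r => g' r ^ 2 * r) volume r₁ r₂ :=
    hsq_int g' hg'aesm (fun r => by rw [hnormsq' r]; nlinarith [sq_nonneg (f' r)])
  have habs_int : ∀ h' : ℝ → ℝ, AEStronglyMeasurable h' (volume.restrict (Ioc r₁ r₂)) →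
      IntervalIntegrable (fun r => h' r ^ 2 * r) volume r₁ r₂ →
      IntervalIntegrable h' volume r₁ r₂ := by
    intro h' haesm hint
    apply IntervalIntegrable.mono_fun'
      (g := fun r => (1 + h' r ^ 2 * r * r₁⁻¹) / 2)
    · exact ((intervalIntegrable_const.add (hint.mul_const r₁⁻¹)).div_const 2)
    · rwa [uIoc_of_le h12.le]
    · rw [uIoc_of_le h12.le]
      filter_upwards [ae_restrict_mem measurableSet_Ioc] with x hx
      have hx1 : r₁ ≤ x := hx.1.le
      have h3 : (1:ℝ) ≤ x * r₁⁻¹ := by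
        rw [← div_eq_mul_inv, le_div_iff₀ hr]
        linarith
      have h4 : h' x ^ 2 * 1 ≤ h' x ^ 2 * (x * r₁⁻¹) :=
        mul_le_mul_of_nonneg_left h3 (sq_nonneg _)
      rw [Real.norm_eq_abs]
      nlinarith [sq_nonneg (|h' x| - 1), sq_abs (h' x)]
  have hf'_int : IntervalIntegrable f' volume r₁ r₂ := habs_int f' hf'aesm hf'2r_int
  have hg'_int : IntervalIntegrable g' volume r₁ r₂ := habs_int g' hg'aesm hg'2r_int
  -- means
  set c1 := (∫ r in r₁..r₂, f r / r) / L with hc1def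
  set c2 := (∫ r in r₁..r₂, g r / r) / L with hc2def
  have hinv_cont : ContinuousOn (fun r : ℝ => r⁻¹) (Icc r₁ r₂) :=
    continuousOn_id.inv₀ hne
  have hdiv_cont : ∀ {h : ℝ → ℝ}, ContinuousOn h (Icc r₁ r₂) →
      ContinuousOn (fun r => h r / r) (Icc r₁ r₂) := fun hc => hc.div continuousOn_id hne
  have hmean : ∀ (h : ℝ → ℝ) (c : ℝ), ContinuousOn h (Icc r₁ r₂) →
      c = (∫ r in r₁..r₂, h r / r) / L →
      (∫ r in r₁..r₂, (h r - c) / r) = 0 := by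
    intro h c hc hcdef
    have h1 : (fun r => (h r - c) / r) = fun r => h r / r - c * r⁻¹ :=
      funext fun r => by ring
    rw [h1, intervalIntegral.integral_sub (hCI (hdiv_cont hc))
      ((hCI hinv_cont).const_mul c), intervalIntegral.integral_const_mul]
    rw [hcdef, div_mul_cancel₀ _ hL.ne', sub_self]
  -- Wirtinger for each component
  have hXwf := wirtinger_core r₁ r₂ hr h12 (fun r => f r - c1) f'
    (fun r hrm => (hfd r hrm).sub_const c1) hf'_int hf'2r_int
    (hmean f c1 hfc hc1def)
  have hXwg := wirtinger_core r₁ r₂ hr h12 (fun r => g r - c2) g'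
    (fun r hrm => (hgd r hrm).sub_const c2) hg'_int hg'2r_int
    (hmean g c2 hgc hc2def)
  rw [← hLeq] at hXwf hXwg
  -- Pythagoras
  have hPyth : ∀ (h : ℝ → ℝ) (c : ℝ), ContinuousOn h (Icc r₁ r₂) →
      c = (∫ r in r₁..r₂, h r / r) / L →
      (∫ r in r₁..r₂, h r ^ 2 / r)
        = L * c ^ 2 + ∫ r in r₁..r₂, (h r - c) ^ 2 / r := by
    intro h c hc hcdef
    have h1 : (fun r => (h r - c) ^ 2 / r)
        = fun r => h r ^ 2 / r - 2 * c * (h r / r) + c ^ 2 * r⁻¹ :=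
      funext fun r => by ring
    have i1 : IntervalIntegrable (fun r => h r ^ 2 / r) volume r₁ r₂ := hCI (hdiv_cont (hc.pow 2))
    have i2 := (hCI (hdiv_cont hc)).const_mul (2 * c)
    have i3 := (hCI hinv_cont).const_mul (c ^ 2)
    have h2 : (∫ r in r₁..r₂, (h r - c) ^ 2 / r)
        = (∫ r in r₁..r₂, h r ^ 2 / r) - 2 * c * (∫ r in r₁..r₂, h r / r)
          + c ^ 2 * L := by
      rw [h1, intervalIntegral.integral_add (i1.sub i2) i3,
        intervalIntegral.integral_sub i1 i2, intervalIntegral.integral_const_mul,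
        intervalIntegral.integral_const_mul]
    have h3 : (∫ r in r₁..r₂, h r / r) = c * L := by
      rw [hcdef, div_mul_cancel₀ _ hL.ne']
    rw [h2, h3]
    ring
  have hPf := hPyth f c1 hfc hc1def
  have hPg := hPyth g c2 hgc hc2def
  -- bounds for A
  set A := ∫ r in r₁..r₂, ρ r / r with hAdef
  have hbddIcc : ∀ᵐ r ∂(volume.restrict (Icc r₁ r₂)), 0 ≤ ρ r ∧ ρ r ≤ 1 := by
    have h1 := hbdd
    rwa [Measure.restrict_congr_set Ioo_ae_eq_Icc] at h1
  have hbddIoc : ∀ᵐ r ∂(volume.restrict (Ioc r₁ r₂)), 0 ≤ ρ r ∧ ρ r ≤ 1 := by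
    have h1 := hbdd
    rwa [Measure.restrict_congr_set Ioo_ae_eq_Ioc] at h1
  have hρr_int : IntervalIntegrable (fun r => ρ r / r) volume r₁ r₂ := by
    rw [intervalIntegrable_iff_integrableOn_Ioc_of_le h12.le]
    apply Integrable.mono' (g := fun _ => r₁⁻¹)
      (integrableOn_const measure_Ioc_lt_top.ne)
    · exact ((hmeas.div measurable_id).aestronglyMeasurable)
    · filter_upwards [hbddIoc, ae_restrict_mem measurableSet_Ioc] with x hb hx
      rw [Real.norm_eq_abs, abs_div, abs_of_nonneg hb.1, abs_of_pos (hr.trans hx.1)]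
      rw [inv_eq_one_div]
      exact div_le_div₀ zero_le_one hb.2 hr hx.1.le
  have hA0 : 0 ≤ A := by
    apply intervalIntegral.integral_nonneg_of_ae_restrict h12.le
    filter_upwards [hbddIcc, ae_restrict_mem measurableSet_Icc] with x hb hx
    exact div_nonneg hb.1 (hr.trans_le hx.1).le
  have hAle : A ≤ L := by
    apply intervalIntegral.integral_mono_ae_restrict h12.le hρr_int (hCI hinv_cont)
    filter_upwards [hbddIcc, ae_restrict_mem measurableSet_Icc] with x hb hx
    have hx0 : 0 < x := hr.trans_le hx.1
    rw [inv_eq_one_div]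
    exact div_le_div₀ zero_le_one hb.2 hx0 le_rfl
  -- integrability of ρ |u|² / r
  obtain ⟨M, hM⟩ := isCompact_Icc.exists_bound_of_continuousOn hucont
  have hM0 : 0 ≤ M := le_trans (norm_nonneg (u r₁)) (hM r₁ (left_mem_Icc.2 h12.le))
  have hρu_int : IntervalIntegrable (fun r => ρ r * ‖u r‖ ^ 2 / r) volume r₁ r₂ := by
    rw [intervalIntegrable_iff_integrableOn_Ioc_of_le h12.le]
    apply Integrable.mono' (g := fun _ => M ^ 2 * r₁⁻¹)
      (integrableOn_const measure_Ioc_lt_top.ne)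
    · have hu2aesm : AEStronglyMeasurable (fun r => ‖u r‖ ^ 2)
          (volume.restrict (Ioc r₁ r₂)) :=
        ((hucont.mono Ioc_subset_Icc_self).norm.pow 2).aestronglyMeasurable measurableSet_Ioc
      have hbase : AEStronglyMeasurable (fun r => ρ r * ‖u r‖ ^ 2 * r⁻¹)
          (volume.restrict (Ioc r₁ r₂)) :=
        ((hmeas.aestronglyMeasurable.mul hu2aesm)).mul
          (measurable_inv.aestronglyMeasurable)
      exact hbase.congr (Eventually.of_forall fun x => (div_eq_mul_inv _ _).symm)
    · filter_upwards [hbddIoc, ae_restrict_mem measurableSet_Ioc] with x hb hx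
      have hx0 : 0 < x := hr.trans hx.1
      have hMx := hM x (Ioc_subset_Icc_self hx)
      rw [Real.norm_eq_abs, abs_div, abs_of_pos hx0, abs_of_nonneg
        (mul_nonneg hb.1 (by positivity))]
      rw [div_le_iff₀ hx0]
      have h5 : ρ x * ‖u x‖ ^ 2 ≤ M ^ 2 := by
        nlinarith [norm_nonneg (u x), hb.1, hb.2, sq_nonneg ‖u x‖]
      have h7 : (1:ℝ) ≤ x * r₁⁻¹ := by
        rw [← div_eq_mul_inv, le_div_iff₀ hr]
        linarith [hx.1]
      nlinarith [sq_nonneg M]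
  -- split of the right-hand side
  set P := ∫ r in r₁..r₂, ρ r * ‖u r‖ ^ 2 / r with hPdef
  set D := ∫ r in r₁..r₂, ‖u' r‖ ^ 2 * r with hDdef
  have hRHS : (∫ r in r₁..r₂, (κ * ‖u' r‖ ^ 2 + ρ r / r ^ 2 * ‖u r‖ ^ 2) * r)
      = κ * D + P := by
    have h1 : EqOn (fun r => (κ * ‖u' r‖ ^ 2 + ρ r / r ^ 2 * ‖u r‖ ^ 2) * r)
        (fun r => κ * (‖u' r‖ ^ 2 * r) + ρ r * ‖u r‖ ^ 2 / r) (uIcc r₁ r₂) := by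
      intro x hx
      rw [huIcc] at hx
      have hx0 : x ≠ 0 := hne x hx
      field_simp
    rw [intervalIntegral.integral_congr h1,
      intervalIntegral.integral_add (hD_int.const_mul κ) hρu_int,
      intervalIntegral.integral_const_mul]
  -- lower bound for P
  set Xwf := ∫ r in r₁..r₂, (f r - c1) ^ 2 / r with hXwfdef
  set Xwg := ∫ r in r₁..r₂, (g r - c2) ^ 2 / r with hXwgdef
  have hwfc : ContinuousOn (fun r => (f r - c1) ^ 2 / r) (Icc r₁ r₂) :=
    hdiv_cont ((hfc.sub continuousOn_const).pow 2)
  have hwgc : ContinuousOn (fun r => (g r - c2) ^ 2 / r) (Icc r₁ r₂) :=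
    hdiv_cont ((hgc.sub continuousOn_const).pow 2)
  have hPlb : κ / β * ((c1 ^ 2 + c2 ^ 2) * A) - κ / (β - κ) * (Xwf + Xwg) ≤ P := by
    have h1 : (∫ r in r₁..r₂, ((κ / β * (c1 ^ 2 + c2 ^ 2)) * (ρ r / r)
        - κ / (β - κ) * ((f r - c1) ^ 2 / r + (g r - c2) ^ 2 / r))) ≤ P := by
      apply intervalIntegral.integral_mono_ae_restrict h12.le
        ((hρr_int.const_mul _).sub (((hCI hwfc).add (hCI hwgc)).const_mul _)) hρu_int
      filter_upwards [hbddIcc, ae_restrict_mem measurableSet_Icc] with x hb hx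
      have hx0 : 0 < x := hr.trans_le hx.1
      have k1 := ptwise1 κ β (ρ x) (f x) c1 hκ.1 hβgt hb.1 hb.2
      have k2 := ptwise1 κ β (ρ x) (g x) c2 hκ.1 hβgt hb.1 hb.2
      have h2 : (κ / β * (c1 ^ 2 + c2 ^ 2)) * (ρ x / x)
          - κ / (β - κ) * ((f x - c1) ^ 2 / x + (g x - c2) ^ 2 / x)
          = (κ / β * (ρ x * (c1 ^ 2 + c2 ^ 2))
            - κ / (β - κ) * ((f x - c1) ^ 2 + (g x - c2) ^ 2)) / x := by
        ring
      have h3 : ρ x * ‖u x‖ ^ 2 / x = (ρ x * (f x ^ 2 + g x ^ 2)) / x := by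
        rw [hnormsq x]
      rw [h2, h3]
      rw [div_le_div_iff_of_pos_right hx0]
      linarith [k1, k2]
    have h4 : (∫ r in r₁..r₂, ((κ / β * (c1 ^ 2 + c2 ^ 2)) * (ρ r / r)
        - κ / (β - κ) * ((f r - c1) ^ 2 / r + (g r - c2) ^ 2 / r)))
        = (κ / β * (c1 ^ 2 + c2 ^ 2)) * A - κ / (β - κ) * (Xwf + Xwg) := by
      rw [intervalIntegral.integral_sub (hρr_int.const_mul _)
        (((hCI hwfc).add (hCI hwgc)).const_mul _),
        intervalIntegral.integral_const_mul, intervalIntegral.integral_const_mul,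
        intervalIntegral.integral_add (hCI hwfc) (hCI hwgc)]
    rw [h4] at h1
    linarith [h1]
  -- splits of X and D
  have hXsplit : (∫ r in r₁..r₂, ‖u r‖ ^ 2 / r)
      = (∫ r in r₁..r₂, f r ^ 2 / r) + (∫ r in r₁..r₂, g r ^ 2 / r) := by
    rw [← intervalIntegral.integral_add (hCI (hdiv_cont (hfc.pow 2)) :
        IntervalIntegrable (fun r => f r ^ 2 / r) volume r₁ r₂)
      (hCI (hdiv_cont (hgc.pow 2)) : IntervalIntegrable (fun r => g r ^ 2 / r) volume r₁ r₂)]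
    apply intervalIntegral.integral_congr
    intro x _
    simp only
    rw [hnormsq x]
    ring
  have hDsplit : D = (∫ r in r₁..r₂, f' r ^ 2 * r) + (∫ r in r₁..r₂, g' r ^ 2 * r) := by
    rw [hDdef, ← intervalIntegral.integral_add hf'2r_int hg'2r_int]
    apply intervalIntegral.integral_congr
    intro x _
    simp only
    rw [hnormsq' x]
    ring
  have hXwf0 : 0 ≤ Xwf := intervalIntegral.integral_nonneg h12.le
    (fun x hx => div_nonneg (sq_nonneg _) (hr.trans_le hx.1).le)
  have hXwg0 : 0 ≤ Xwg := intervalIntegral.integral_nonneg h12.le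
    (fun x hx => div_nonneg (sq_nonneg _) (hr.trans_le hx.1).le)
  -- key constant inequality
  have hkey : 1 / β + 1 / (β - κ) ≤ π ^ 2 / L ^ 2 := by
    have h1 : 1 / β + 1 / (β - κ) = π ^ 2 / Real.log 3 ^ 2 := by
      rw [div_add_div _ _ hβ0.ne' hδ0.ne', div_eq_div_iff (by positivity) (by positivity)]
      linear_combination -hβid
    rw [h1, div_le_div_iff₀ (by positivity) (by positivity)]
    nlinarith [hLle, hL, mul_le_mul hLle hLle hL.le hl3.le]
  -- conclude
  rw [hRHS]
  set Df := ∫ r in r₁..r₂, f' r ^ 2 * r with hDfdef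
  set Dg := ∫ r in r₁..r₂, g' r ^ 2 * r with hDgdef
  have hDf : π ^ 2 / L ^ 2 * Xwf ≤ Df := by
    have h3 := mul_le_mul_of_nonneg_right hXwf (by positivity : (0:ℝ) ≤ π ^ 2 / L ^ 2)
    have h4 : (L / π) ^ 2 * Df * (π ^ 2 / L ^ 2) = Df := by
      field_simp
    rw [h4] at h3
    linarith [h3]
  have hDg : π ^ 2 / L ^ 2 * Xwg ≤ Dg := by
    have h3 := mul_le_mul_of_nonneg_right hXwg (by positivity : (0:ℝ) ≤ π ^ 2 / L ^ 2)
    have h4 : (L / π) ^ 2 * Dg * (π ^ 2 / L ^ 2) = Dg := by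
      field_simp
    rw [h4] at h3
    linarith [h3]
  have hXw0 : (0:ℝ) ≤ Xwf + Xwg := by linarith
  have hstep2 : κ * (A / L) / β * (L * c1 ^ 2 + L * c2 ^ 2)
      = κ / β * ((c1 ^ 2 + c2 ^ 2) * A) := by
    field_simp
  have hc : κ * (A / L) / β + κ / (β - κ) ≤ κ * (π ^ 2 / L ^ 2) := by
    have h6 : A / L ≤ 1 := (div_le_one hL).2 hAle
    have h5 : κ * (A / L) / β ≤ κ * (1 / β) := by
      have h5a : κ * (A / L) ≤ κ := mul_le_of_le_one_right hκ.1 h6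
      calc κ * (A / L) / β ≤ κ / β := (div_le_div_iff_of_pos_right hβ0).2 h5a
        _ = κ * (1 / β) := by ring
    have h8 := mul_le_mul_of_nonneg_left hkey hκ.1
    have h9 : κ * (1 / β) = κ / β := by ring
    have h10 : κ * (1 / β + 1 / (β - κ)) = κ * (1 / β) + κ / (β - κ) := by ring
    linarith
  have hmulXw := mul_le_mul_of_nonneg_right hc hXw0
  have hDfg : κ * (π ^ 2 / L ^ 2) * (Xwf + Xwg) ≤ κ * (Df + Dg) := by
    have h10 : π ^ 2 / L ^ 2 * (Xwf + Xwg) ≤ Df + Dg := by linarith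
    have h11 := mul_le_mul_of_nonneg_left h10 hκ.1
    linarith [h11]
  have hfinal : κ * (A / L) / β * (∫ r in r₁..r₂, ‖u r‖ ^ 2 / r)
      = κ / β * ((c1 ^ 2 + c2 ^ 2) * A) + κ * (A / L) / β * (Xwf + Xwg) := by
    rw [hXsplit, hPf, hPg, ← hstep2]
    ring
  have hDmul : κ * D = κ * Df + κ * Dg := by rw [hDsplit]; ring
  rw [hfinal]
  linarith [hPlb, hmulXw, hDfg, hDmul]
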